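/- Let w : [0,T) → ℝ be C¹ with T < ∞, satisfying the blow-up rate bounds: there exists N > 0 with -½ w² - N ≤ w'(t) ≤ -½ w² + N on [0,T), and lim_{t→T⁻} w(t) = -∞. Then lim_{t→T⁻} w(t)(T - t) = -2. -/

import Mathlib

open Set Filter

set_option maxHeartbeats 1000000 in
/-- Key estimate: for small ε, eventually `|w t * (T - t) + 2| ≤ 8 ε`. -/
lemma blowup_key
    (T N : ℝ) (hT : 0 < T) (hN : 0 < N)
    (w w' : ℝ → ℝ)
    (hderiv : ∀ t ∈ Set.Ico (0:ℝ) T, HasDerivAt w (w' t) t)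
    (hlow : ∀ t ∈ Set.Ico (0:ℝ) T, -(1/2) * (w t) ^ 2 - N ≤ w' t)
    (hup : ∀ t ∈ Set.Ico (0:ℝ) T, w' t ≤ -(1/2) * (w t) ^ 2 + N)
    (hblow : Filter.Tendsto w (nhdsWithin T (Set.Iio T)) Filter.atBot)
    (ε : ℝ) (hε : 0 < ε) (hε4 : ε ≤ 1/4) :
    ∃ t₁, 0 ≤ t₁ ∧ t₁ < T ∧ ∀ t ∈ Set.Ioo t₁ T, |w t * (T - t) + 2| ≤ 8 * ε := by
  -- choose t₁ so that w t < -√(N/ε) on (t₁, T)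
  have hNε : 0 < N / ε := div_pos hN hε
  have hev : ∀ᶠ t in nhdsWithin T (Set.Iio T), w t < -Real.sqrt (N / ε) :=
    hblow.eventually (eventually_lt_atBot _)
  obtain ⟨l, hlT, hl⟩ := (mem_nhdsLT_iff_exists_Ioo_subset).1 hev
  refine ⟨max l 0, le_max_right _ _, max_lt hlT hT, ?_⟩
  set t₁ : ℝ := max l 0 with ht₁def
  have ht₁0 : 0 ≤ t₁ := le_max_right _ _
  -- basic facts on (t₁, T)
  have hmem : ∀ x ∈ Set.Ioo t₁ T, x ∈ Set.Ico (0:ℝ) T := fun x hx =>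
    ⟨le_trans ht₁0 hx.1.le, hx.2⟩
  have hwneg : ∀ x ∈ Set.Ioo t₁ T, w x < 0 := by
    intro x hx
    have h1 : w x < -Real.sqrt (N / ε) := hl ⟨lt_of_le_of_lt (le_max_left _ _) hx.1, hx.2⟩
    have h0 : (0:ℝ) ≤ Real.sqrt (N / ε) := Real.sqrt_nonneg _
    linarith
  have hwsq : ∀ x ∈ Set.Ioo t₁ T, N / ε ≤ (w x) ^ 2 := by
    intro x hx
    have h1 : w x < -Real.sqrt (N / ε) := hl ⟨lt_of_le_of_lt (le_max_left _ _) hx.1, hx.2⟩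
    have h0 : (0:ℝ) ≤ Real.sqrt (N / ε) := Real.sqrt_nonneg _
    have h2 : Real.sqrt (N / ε) ^ 2 = N / ε := Real.sq_sqrt hNε.le
    nlinarith [sq_nonneg (w x + Real.sqrt (N / ε))]
  have hwne : ∀ x ∈ Set.Ioo t₁ T, w x ≠ 0 := fun x hx => (hwneg x hx).ne
  -- derivative of v = w⁻¹ minus linear part, with bound ε
  set g : ℝ → ℝ := fun x => (w x)⁻¹ - (1/2) * x with hgdef
  set g' : ℝ → ℝ := fun x => -w' x / (w x) ^ 2 - 1/2 with hg'def
  have hgderiv : ∀ x ∈ Set.Ioo t₁ T, HasDerivAt g (g' x) x := by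
    intro x hx
    have h1 : HasDerivAt (fun y => (w y)⁻¹) (-w' x / (w x) ^ 2) x :=
      (hderiv x (hmem x hx)).inv (hwne x hx)
    have h2 : HasDerivAt (fun y : ℝ => (1/2 : ℝ) * y) (1/2) x := by
      simpa using (hasDerivAt_id x).const_mul (1/2 : ℝ)
    exact h1.sub h2
  have hgbound : ∀ x ∈ Set.Ioo t₁ T, ‖g' x‖ ≤ ε := by
    intro x hx
    have hsq : 0 < (w x) ^ 2 := by
      have := hwne x hx; positivity
    have hN' : N ≤ ε * (w x) ^ 2 := by
      have := hwsq x hx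
      rw [div_le_iff₀ hε] at this
      linarith [this]
    have hlo := hlow x (hmem x hx)
    have hhi := hup x (hmem x hx)
    have h1 : -w' x / (w x) ^ 2 ≤ 1/2 + ε := by
      rw [div_le_iff₀ hsq]; nlinarith
    have h2 : 1/2 - ε ≤ -w' x / (w x) ^ 2 := by
      rw [le_div_iff₀ hsq]; nlinarith
    rw [Real.norm_eq_abs, abs_le]
    constructor <;> simp only [hg'def] <;> linarith
  -- v tends to 0
  have hv0 : Filter.Tendsto (fun s => (w s)⁻¹) (nhdsWithin T (Set.Iio T)) (nhds 0) := by
    have h1 : Filter.Tendsto (fun s => -w s) (nhdsWithin T (Set.Iio T)) Filter.atTop :=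
      Filter.tendsto_neg_atBot_atTop.comp hblow
    have h2 : Filter.Tendsto (fun s => (-w s)⁻¹) (nhdsWithin T (Set.Iio T)) (nhds 0) :=
      tendsto_inv_atTop_zero.comp h1
    have := h2.neg
    simpa [inv_neg, neg_neg] using this
  -- the interval estimate on v
  have hvest : ∀ t ∈ Set.Ioo t₁ T, |(w t)⁻¹ + (1/2) * (T - t)| ≤ ε * (T - t) := by
    intro t ht
    have htT : t < T := ht.2
    -- for each s ∈ [t, T), MVT bound
    have hstep : ∀ s ∈ Set.Ico t T, ‖g s - g t‖ ≤ ε * (s - t) := by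
      intro s hs
      have hsub : Set.Icc t s ⊆ Set.Ioo t₁ T := fun x hx =>
        ⟨lt_of_lt_of_le ht.1 hx.1, lt_of_le_of_lt hx.2 hs.2⟩
      have hf : ∀ x ∈ Set.Icc t s, HasDerivWithinAt g (g' x) (Set.Icc t s) x :=
        fun x hx => (hgderiv x (hsub hx)).hasDerivWithinAt
      have hb : ∀ x ∈ Set.Ico t s, ‖g' x‖ ≤ ε := fun x hx =>
        hgbound x (hsub ⟨hx.1, hx.2.le⟩)
      exact norm_image_sub_le_of_norm_deriv_le_segment' hf hb s
        ⟨hs.1, le_refl s⟩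
    -- take the limit s → T⁻
    have hF : Filter.Tendsto (fun s => ‖g s - g t‖) (nhdsWithin T (Set.Iio T))
        (nhds ‖(0 - (1/2) * T) - g t‖) := by
      have hid : Filter.Tendsto (fun s : ℝ => s) (nhdsWithin T (Set.Iio T)) (nhds T) :=
        tendsto_id.mono_left nhdsWithin_le_nhds
      have hgl : Filter.Tendsto g (nhdsWithin T (Set.Iio T)) (nhds (0 - (1/2) * T)) :=
        hv0.sub (hid.const_mul (1/2 : ℝ))
      exact (hgl.sub tendsto_const_nhds).norm
    have hG : Filter.Tendsto (fun s => ε * (s - t)) (nhdsWithin T (Set.Iio T))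
        (nhds (ε * (T - t))) := by
      have hid : Filter.Tendsto (fun s : ℝ => s) (nhdsWithin T (Set.Iio T)) (nhds T) :=
        tendsto_id.mono_left nhdsWithin_le_nhds
      exact (hid.sub tendsto_const_nhds).const_mul ε
    have hev2 : ∀ᶠ s in nhdsWithin T (Set.Iio T), ‖g s - g t‖ ≤ ε * (s - t) := by
      filter_upwards [Ioo_mem_nhdsLT_of_mem (⟨htT, le_refl T⟩ : T ∈ Set.Ioc t T)]
        with s hs
      exact hstep s ⟨hs.1.le, hs.2⟩
    have hlim := le_of_tendsto_of_tendsto hF hG hev2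
    have : ‖(0 - (1/2) * T) - g t‖ = |(w t)⁻¹ + (1/2) * (T - t)| := by
      rw [Real.norm_eq_abs, ← abs_neg, hgdef]
      ring_nf
    rwa [this] at hlim
  -- final algebra
  intro t ht
  have htT : t < T := ht.2
  have hd : 0 < T - t := sub_pos.2 htT
  have hW : w t < 0 := hwneg t ht
  have hWV : w t * (w t)⁻¹ = 1 := mul_inv_cancel₀ (hwne t ht)
  have hest := hvest t ht
  rw [abs_le] at hest
  obtain ⟨hest1, hest2⟩ := hest
  -- hest1 : -(ε * (T - t)) ≤ (w t)⁻¹ + (1/2)*(T-t), hest2 : ≤ ε * (T - t)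
  have hVneg : (w t)⁻¹ < 0 := inv_neg''.2 hW
  set V := (w t)⁻¹
  set d := T - t
  have hVub : V ≤ -(1/2 - ε) * d := by simp only [neg_mul]; linarith
  have hVlb : -(1/2 + ε) * d ≤ V := by simp only [neg_mul]; linarith
  have hεhalf : 0 < 1/2 - ε := by linarith
  -- from w t * V = 1 and bounds on V, bound w t * d
  have hlb : -8 * ε ≤ w t * d + 2 := by
    have key : (1/2 - ε) * (w t * d) + 1 ≥ 0 := by
      have h := mul_nonneg (neg_nonneg.2 hW.le) (sub_nonneg.2 hVub)
      nlinarith [h, hWV]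
    by_contra hcon
    push_neg at hcon
    have hp : 0 < -(w t * d) - 2 - 8 * ε := by linarith
    have h1 := mul_pos hεhalf hp
    have h2 : (0:ℝ) ≤ ε * (1 - 4 * ε) := mul_nonneg hε.le (by linarith)
    nlinarith [key, h1, h2]
  have hub : w t * d + 2 ≤ 8 * ε := by
    have key : (1/2 + ε) * (w t * d) + 1 ≤ 0 := by
      have h := mul_nonneg (neg_nonneg.2 hW.le) (sub_nonneg.2 hVlb)
      nlinarith [h, hWV]
    by_contra hcon
    push_neg at hcon
    have hp : 0 < w t * d + 2 - 8 * ε := by linarith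
    have h1 := mul_pos (show (0:ℝ) < 1/2 + ε by linarith) hp
    nlinarith [key, h1, sq_nonneg ε]
  rw [abs_le]; constructor <;> linarith

theorem blowup_rate_muCH
    (T N : ℝ) (hT : 0 < T) (hN : 0 < N)
    (w w' : ℝ → ℝ)
    (hderiv : ∀ t ∈ Set.Ico (0:ℝ) T, HasDerivAt w (w' t) t)
    (hcont : ContinuousOn w' (Set.Ico (0:ℝ) T))
    (hlow : ∀ t ∈ Set.Ico (0:ℝ) T, -(1/2) * (w t) ^ 2 - N ≤ w' t)
    (hup : ∀ t ∈ Set.Ico (0:ℝ) T, w' t ≤ -(1/2) * (w t) ^ 2 + N)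
    (hblow : Filter.Tendsto w (nhdsWithin T (Set.Iio T)) Filter.atBot) :
    Filter.Tendsto (fun t => w t * (T - t)) (nhdsWithin T (Set.Iio T))
      (nhds (-2)) := by
  rw [Metric.tendsto_nhds]
  intro δ hδ
  set ε : ℝ := min (1/4) (δ/9) with hεdef
  have hε : 0 < ε := lt_min (by norm_num) (by linarith)
  have hε4 : ε ≤ 1/4 := min_le_left _ _
  have hεδ : ε ≤ δ/9 := min_le_right _ _
  obtain ⟨t₁, ht₁0, ht₁T, hkey⟩ :=
    blowup_key T N hT hN w w' hderiv hlow hup hblow ε hε hε4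
  filter_upwards [Ioo_mem_nhdsLT_of_mem (⟨ht₁T, le_refl T⟩ : T ∈ Set.Ioc t₁ T)]
    with t ht
  have := hkey t ht
  rw [Real.dist_eq]
  have h8 : 8 * ε < δ := by linarith
  calc |w t * (T - t) - (-2)| = |w t * (T - t) + 2| := by ring_nf
    _ ≤ 8 * ε := this
    _ < δ := h8
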